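/- Let (F,G,L) be a complete hereditary cotorsion triplet in an abelian category C. Then F ∩ G equals the class of projective objects of C, and G ∩ L equals the class of injective objects of C. -/

import Mathlib

open CategoryTheory Limits

namespace Paper

universe w v u

variable {C : Type u} [Category.{v} C] [Abelian C]

section ExtDefs
variable [HasExt.{w} C]

/-- The right `Ext^1`-orthogonal class. -/
def rightPerp1 (F : Set C) : Set C :=
  {B | ∀ A ∈ F, Subsingleton (Abelian.Ext A B 1)}

/-- The left `Ext^1`-orthogonal class. -/
def leftPerp1 (L : Set C) : Set C :=
  {A | ∀ B ∈ L, Subsingleton (Abelian.Ext A B 1)}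

/-- The right `Ext^{>0}`-orthogonal class. -/
def rightPerp (F : Set C) : Set C :=
  {B | ∀ A ∈ F, ∀ n : ℕ, 0 < n → Subsingleton (Abelian.Ext A B n)}

/-- The left `Ext^{>0}`-orthogonal class. -/
def leftPerp (L : Set C) : Set C :=
  {A | ∀ B ∈ L, ∀ n : ℕ, 0 < n → Subsingleton (Abelian.Ext A B n)}

/-- `(Y, X)` is a cotorsion pair: each class is the `Ext^1`-orthogonal of the other. -/
structure IsCotorsionPair (Y X : Set C) : Prop where
  mem_left_iff : ∀ A : C, A ∈ Y ↔ ∀ B ∈ X, Subsingleton (Abelian.Ext A B 1)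
  mem_right_iff : ∀ B : C, B ∈ X ↔ ∀ A ∈ Y, Subsingleton (Abelian.Ext A B 1)

/-- Hereditary: `Ext^i(Y, X) = 0` for all `i > 0`. -/
def Hereditary (Y X : Set C) : Prop :=
  ∀ A ∈ Y, ∀ B ∈ X, ∀ n : ℕ, 0 < n → Subsingleton (Abelian.Ext A B n)

end ExtDefs

/-- There exists a short exact sequence `0 ⟶ A ⟶ B ⟶ X ⟶ 0`. -/
def SES (A B X : C) : Prop :=
  ∃ (f : A ⟶ B) (g : B ⟶ X) (w : f ≫ g = 0), (ShortComplex.mk f g w).ShortExact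

/-- Completeness of a pair of classes: every object admits the two approximation
short exact sequences. -/
def Complete (Y X : Set C) : Prop :=
  ∀ M : C, (∃ B ∈ X, ∃ A ∈ Y, SES B A M) ∧ (∃ B ∈ X, ∃ A ∈ Y, SES M B A)

/-- A class is resolving if it contains the projectives and is closed under
extensions and under kernels of epimorphisms between its objects. -/
def Resolving (Y : Set C) : Prop :=
  (∀ P : C, Projective P → P ∈ Y) ∧
  (∀ A E B : C, SES A E B → A ∈ Y → B ∈ Y → E ∈ Y) ∧
  (∀ A E B : C, SES A E B → E ∈ Y → B ∈ Y → A ∈ Y)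

/-- A class is coresolving if it contains the injectives and is closed under
extensions and under cokernels of monomorphisms between its objects. -/
def Coresolving (X : Set C) : Prop :=
  (∀ I : C, Injective I → I ∈ X) ∧
  (∀ A E B : C, SES A E B → A ∈ X → B ∈ X → E ∈ X) ∧
  (∀ A E B : C, SES A E B → A ∈ X → E ∈ X → B ∈ X)

/-- `φ : F₀ ⟶ M` is an `F`-precover of `M`. -/
def IsPrecover (F : Set C) {F₀ M : C} (φ : F₀ ⟶ M) : Prop :=
  F₀ ∈ F ∧ ∀ F' ∈ F, ∀ g : F' ⟶ M, ∃ h : F' ⟶ F₀, h ≫ φ = g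

/-- `ψ : M ⟶ L₀` is an `L`-preenvelope of `M`. -/
def IsPreenvelope (L : Set C) {M L₀ : C} (ψ : M ⟶ L₀) : Prop :=
  L₀ ∈ L ∧ ∀ L' ∈ L, ∀ g : M ⟶ L', ∃ h : L₀ ⟶ L', ψ ≫ h = g

/-- `F` is a precovering class. -/
def Precovering (F : Set C) : Prop :=
  ∀ M : C, ∃ (F₀ : C) (φ : F₀ ⟶ M), IsPrecover F φ

/-- `L` is a preenveloping class. -/
def Preenveloping (L : Set C) : Prop :=
  ∀ M : C, ∃ (L₀ : C) (ψ : M ⟶ L₀), IsPreenvelope L ψ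

/-- `F` is special precovering: every object has an epic `F`-precover with
kernel in `F^{⊥₁}`. -/
def SpecialPrecovering [HasExt.{w} C] (F : Set C) : Prop :=
  ∀ M : C, ∃ (F₀ : C) (φ : F₀ ⟶ M), IsPrecover F φ ∧ Epi φ ∧
    kernel φ ∈ rightPerp1.{w} F

/-- `L` is special preenveloping: every object has a monic `L`-preenvelope with
cokernel in `^{⊥₁}L`. -/
def SpecialPreenveloping [HasExt.{w} C] (L : Set C) : Prop :=
  ∀ M : C, ∃ (L₀ : C) (ψ : M ⟶ L₀), IsPreenvelope L ψ ∧ Mono ψ ∧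
    cokernel ψ ∈ leftPerp1.{w} L

/-- The class of direct summands of objects of `F`. -/
def Smd (F : Set C) : Set C :=
  {A | ∃ B ∈ F, ∃ (i : A ⟶ B) (r : B ⟶ A), i ≫ r = 𝟙 A}

/-- Data of a (not necessarily exact) resolution `⋯ ⟶ F₁ ⟶ F₀ ⟶ M ⟶ 0`. -/
structure Resolution (M : C) where
  obj : ℕ → C
  d : ∀ n : ℕ, obj (n + 1) ⟶ obj n
  ε : obj 0 ⟶ M
  d_comp_d : ∀ n : ℕ, d (n + 1) ≫ d n = 0
  d_comp_ε : d 0 ≫ ε = 0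

namespace Resolution

variable {M : C} (R : Resolution M)

/-- All objects of the resolution lie in `S`. -/
def ObjsIn (S : Set C) : Prop := ∀ n : ℕ, R.obj n ∈ S

/-- The resolution becomes exact after applying `Hom(X, -)`. -/
def HomLeftAcyclic (X : C) : Prop :=
  (∀ g : X ⟶ M, ∃ h : X ⟶ R.obj 0, h ≫ R.ε = g) ∧
  (∀ h : X ⟶ R.obj 0, h ≫ R.ε = 0 → ∃ k : X ⟶ R.obj 1, k ≫ R.d 0 = h) ∧
  (∀ (n : ℕ) (h : X ⟶ R.obj (n + 1)), h ≫ R.d n = 0 →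
    ∃ k : X ⟶ R.obj (n + 2), k ≫ R.d (n + 1) = h)

/-- The resolution becomes exact after applying `Hom(-, L')`. -/
def HomRightAcyclic (L' : C) : Prop :=
  (∀ g : M ⟶ L', R.ε ≫ g = 0 → g = 0) ∧
  (∀ g : R.obj 0 ⟶ L', R.d 0 ≫ g = 0 → ∃ k : M ⟶ L', R.ε ≫ k = g) ∧
  (∀ (n : ℕ) (g : R.obj (n + 1) ⟶ L'), R.d (n + 1) ≫ g = 0 →
    ∃ k : R.obj n ⟶ L', R.d n ≫ k = g)

end Resolution

/-- Data of a (not necessarily exact) coresolution `0 ⟶ M ⟶ L⁰ ⟶ L¹ ⟶ ⋯`. -/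
structure Coresolution (M : C) where
  obj : ℕ → C
  d : ∀ n : ℕ, obj n ⟶ obj (n + 1)
  η : M ⟶ obj 0
  d_comp_d : ∀ n : ℕ, d n ≫ d (n + 1) = 0
  η_comp_d : η ≫ d 0 = 0

namespace Coresolution

variable {M : C} (R : Coresolution M)

/-- All objects of the coresolution lie in `S`. -/
def ObjsIn (S : Set C) : Prop := ∀ n : ℕ, R.obj n ∈ S

/-- The coresolution becomes exact after applying `Hom(X, -)`. -/
def HomLeftAcyclic (X : C) : Prop :=
  (∀ g : X ⟶ M, g ≫ R.η = 0 → g = 0) ∧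
  (∀ g : X ⟶ R.obj 0, g ≫ R.d 0 = 0 → ∃ k : X ⟶ M, k ≫ R.η = g) ∧
  (∀ (n : ℕ) (g : X ⟶ R.obj (n + 1)), g ≫ R.d (n + 1) = 0 →
    ∃ k : X ⟶ R.obj n, k ≫ R.d n = g)

/-- The coresolution becomes exact after applying `Hom(-, L')`. -/
def HomRightAcyclic (L' : C) : Prop :=
  (∀ g : M ⟶ L', ∃ h : R.obj 0 ⟶ L', R.η ≫ h = g) ∧
  (∀ h : R.obj 0 ⟶ L', R.η ≫ h = 0 → ∃ k : R.obj 1 ⟶ L', R.d 0 ≫ k = h) ∧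
  (∀ (n : ℕ) (h : R.obj (n + 1) ⟶ L'), R.d n ≫ h = 0 →
    ∃ k : R.obj (n + 2) ⟶ L', R.d (n + 1) ≫ k = h)

end Coresolution

/-- `(F, L)` is a balanced pair: `F` is precovering, `L` is preenveloping, every object
has a `Hom(-, L)`-acyclic `F`-resolution and a `Hom(F, -)`-acyclic `L`-coresolution. -/
def BalancedPair (F L : Set C) : Prop :=
  Precovering F ∧ Preenveloping L ∧
  (∀ M : C, ∃ R : Resolution M, R.ObjsIn F ∧
    (∀ X ∈ F, R.HomLeftAcyclic X) ∧ (∀ Y ∈ L, R.HomRightAcyclic Y)) ∧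
  (∀ M : C, ∃ R : Coresolution M, R.ObjsIn L ∧
    (∀ X ∈ F, R.HomLeftAcyclic X) ∧ (∀ Y ∈ L, R.HomRightAcyclic Y))

/-- Admissible: every `F`-precover is epic and every `L`-preenvelope is monic. -/
def Admissible (F L : Set C) : Prop :=
  (∀ (F₀ M : C) (φ : F₀ ⟶ M), IsPrecover F φ → Epi φ) ∧
  (∀ (M L₀ : C) (ψ : M ⟶ L₀), IsPreenvelope L ψ → Mono ψ)

section Aux

open CategoryTheory.Abelian DerivedCategory

universe w'

variable {C : Type u} [Category.{v} C] [Abelian C]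

/-- The single functor to the derived category, composed with homology, is
isomorphic to the identity. -/
noncomputable def singleCompHomologyIso [HasDerivedCategory.{w'} C] :
    DerivedCategory.singleFunctor C 0 ⋙ DerivedCategory.homologyFunctor C 0 ≅ 𝟭 C :=
  Functor.isoWhiskerRight
    (show DerivedCategory.singleFunctor C 0 ≅
        CochainComplex.singleFunctor C 0 ⋙ DerivedCategory.Q from
      { hom := (singleFunctorsPostcompQIso C).hom.hom 0
        inv := (singleFunctorsPostcompQIso C).inv.hom 0
        hom_inv_id := by
          exact SingleFunctors.hom_inv_id_hom _ 0
        inv_hom_id := by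
          exact SingleFunctors.inv_hom_id_hom _ 0 })
    (DerivedCategory.homologyFunctor C 0) ≪≫
  Functor.associator _ _ _ ≪≫
  Functor.isoWhiskerLeft (CochainComplex.singleFunctor C 0)
    (DerivedCategory.homologyFunctorFactors C 0) ≪≫
  HomologicalComplex.homologyFunctorSingleIso C _ 0

section
variable [HasExt.{w} C] [HasDerivedCategory.{w'} C]

lemma exists_hom_of_ext_zero_comp {A B X : C}
    (x : Abelian.Ext A B 0) (u : B ⟶ X) (v : A ⟶ X)
    (hx : x.comp (Ext.mk₀ u) (add_zero 0) = Ext.mk₀ v) :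
    ∃ s : A ⟶ B, s ≫ u = v := by
  let S := DerivedCategory.singleFunctor C 0
  let H := DerivedCategory.homologyFunctor C 0
  let ι : S ⋙ H ≅ 𝟭 C := singleCompHomologyIso
  obtain ⟨σ, hσ⟩ : ∃ σ : S.obj A ⟶ S.obj B,
      ShiftedHom.mk₀ ((0 : ℕ) : ℤ) (by simp) σ = x.hom :=
    ⟨(ShiftedHom.homEquiv ((0 : ℕ) : ℤ) (by simp)).symm x.hom,
      (ShiftedHom.homEquiv _ _).apply_symm_apply _⟩
  have h1 := congrArg Ext.hom hx
  rw [Ext.comp_hom, Ext.mk₀_hom, Ext.mk₀_hom, ← hσ, ShiftedHom.mk₀_comp_mk₀] at h1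
  have h3 : σ ≫ S.map u = S.map v :=
    (ShiftedHom.homEquiv ((0 : ℕ) : ℤ) (by simp)).injective (by
      simpa only [ShiftedHom.homEquiv_apply] using h1)
  refine ⟨ι.inv.app A ≫ H.map σ ≫ ι.hom.app B, ?_⟩
  have nat_u := ι.hom.naturality u
  have nat_v := ι.hom.naturality v
  simp only [Functor.comp_map, Functor.id_map] at nat_u nat_v
  calc (ι.inv.app A ≫ H.map σ ≫ ι.hom.app B) ≫ u
      = ι.inv.app A ≫ H.map σ ≫ H.map (S.map u) ≫ ι.hom.app X := by
        simp only [Category.assoc]; rw [← nat_u]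
    _ = ι.inv.app A ≫ H.map (σ ≫ S.map u) ≫ ι.hom.app X := by
        rw [H.map_comp, Category.assoc]
    _ = ι.inv.app A ≫ H.map (S.map v) ≫ ι.hom.app X := by rw [h3]
    _ = ι.inv.app A ≫ ι.hom.app A ≫ v := by rw [nat_v]
    _ = v := by simp

lemma exists_hom_of_comp_ext_zero {A B X : C}
    (x : Abelian.Ext A B 0) (u : X ⟶ A) (v : X ⟶ B)
    (hx : (Ext.mk₀ u).comp x (zero_add 0) = Ext.mk₀ v) :
    ∃ s : A ⟶ B, u ≫ s = v := by
  let S := DerivedCategory.singleFunctor C 0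
  let H := DerivedCategory.homologyFunctor C 0
  let ι : S ⋙ H ≅ 𝟭 C := singleCompHomologyIso
  obtain ⟨σ, hσ⟩ : ∃ σ : S.obj A ⟶ S.obj B,
      ShiftedHom.mk₀ ((0 : ℕ) : ℤ) (by simp) σ = x.hom :=
    ⟨(ShiftedHom.homEquiv ((0 : ℕ) : ℤ) (by simp)).symm x.hom,
      (ShiftedHom.homEquiv _ _).apply_symm_apply _⟩
  have h1 := congrArg Ext.hom hx
  rw [Ext.comp_hom, Ext.mk₀_hom, Ext.mk₀_hom, ← hσ, ShiftedHom.mk₀_comp_mk₀] at h1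
  have h3 : S.map u ≫ σ = S.map v :=
    (ShiftedHom.homEquiv ((0 : ℕ) : ℤ) (by simp)).injective (by
      simpa only [ShiftedHom.homEquiv_apply] using h1)
  refine ⟨ι.inv.app A ≫ H.map σ ≫ ι.hom.app B, ?_⟩
  have nat_u := ι.inv.naturality u
  have nat_v := ι.hom.naturality v
  simp only [Functor.comp_map, Functor.id_map] at nat_u nat_v
  calc u ≫ ι.inv.app A ≫ H.map σ ≫ ι.hom.app B
      = ι.inv.app X ≫ H.map (S.map u) ≫ H.map σ ≫ ι.hom.app B := by
        rw [← Category.assoc, nat_u]; simp only [Category.assoc]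
    _ = ι.inv.app X ≫ H.map (S.map u ≫ σ) ≫ ι.hom.app B := by
        rw [H.map_comp, Category.assoc]
    _ = ι.inv.app X ≫ H.map (S.map v) ≫ ι.hom.app B := by rw [h3]
    _ = ι.inv.app X ≫ ι.hom.app X ≫ v := by rw [nat_v]
    _ = v := by simp

end

variable [HasExt.{w} C]

lemma exists_section_of_subsingleton_ext {S : ShortComplex C} (hS : S.ShortExact)
    (h : Subsingleton (Abelian.Ext S.X₃ S.X₁ 1)) :
    ∃ s : S.X₃ ⟶ S.X₂, s ≫ S.g = 𝟙 S.X₃ := by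
  obtain ⟨x₂, hx₂⟩ := Ext.covariant_sequence_exact₃ S.X₃ hS (Ext.mk₀ (𝟙 S.X₃)) (zero_add 1)
    (Subsingleton.elim _ _)
  letI := HasDerivedCategory.standard C
  exact exists_hom_of_ext_zero_comp x₂ S.g (𝟙 S.X₃) hx₂

lemma exists_retraction_of_subsingleton_ext {S : ShortComplex C} (hS : S.ShortExact)
    (h : Subsingleton (Abelian.Ext S.X₃ S.X₁ 1)) :
    ∃ r : S.X₂ ⟶ S.X₁, S.f ≫ r = 𝟙 S.X₁ := by
  obtain ⟨x₂, hx₂⟩ := Ext.contravariant_sequence_exact₁ hS S.X₁ (Ext.mk₀ (𝟙 S.X₁)) rfl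
    (Subsingleton.elim _ _)
  letI := HasDerivedCategory.standard C
  exact exists_hom_of_comp_ext_zero x₂ S.f (𝟙 S.X₁) hx₂

lemma projective_of_ext_vanish {A : C}
    (h : ∀ K : C, Subsingleton (Abelian.Ext A K 1)) : Projective A := by
  constructor
  intro E X f e he
  have hS : (ShortComplex.mk (kernel.ι (pullback.fst f e)) (pullback.fst f e)
      (kernel.condition _)).ShortExact :=
    { exact := ShortComplex.exact_of_f_is_kernel _ (kernelIsKernel _) }
  obtain ⟨s, hs⟩ := exists_section_of_subsingleton_ext hS (h _)
  exact ⟨s ≫ pullback.snd f e, by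
    rw [Category.assoc, ← pullback.condition, ← Category.assoc, hs, Category.id_comp]⟩

lemma injective_of_ext_vanish {B : C}
    (h : ∀ K : C, Subsingleton (Abelian.Ext K B 1)) : Injective B := by
  constructor
  intro X Y g f hf
  have hS : (ShortComplex.mk (pushout.inl g f) (cokernel.π (pushout.inl g f))
      (cokernel.condition _)).ShortExact :=
    { exact := ShortComplex.exact_of_g_is_cokernel _ (cokernelIsCokernel _) }
  obtain ⟨r, hr⟩ := exists_retraction_of_subsingleton_ext hS (h _)
  exact ⟨pushout.inr g f ≫ r, by
    rw [← Category.assoc, ← pushout.condition, Category.assoc, hr, Category.comp_id]⟩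

lemma subsingleton_ext_of_retract_fst {A P B : C} (i : A ⟶ P) (r : P ⟶ A)
    (hir : i ≫ r = 𝟙 A) (h : Subsingleton (Abelian.Ext P B 1)) :
    Subsingleton (Abelian.Ext A B 1) := by
  have key : ∀ z : Abelian.Ext A B 1, z = 0 := by
    intro z
    have hz : (Ext.mk₀ r).comp z (zero_add 1) = 0 := Subsingleton.elim _ _
    calc z = (Ext.mk₀ (i ≫ r)).comp z (zero_add 1) := by rw [hir, Ext.mk₀_id_comp]
      _ = (Ext.mk₀ i).comp ((Ext.mk₀ r).comp z (zero_add 1)) (zero_add 1) := by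
          rw [Ext.mk₀_comp_mk₀_assoc]
      _ = 0 := by rw [hz, Ext.comp_zero]
  exact ⟨fun x y => by rw [key x, key y]⟩

lemma subsingleton_ext_of_retract_snd {A B Q : C} (i : B ⟶ Q) (r : Q ⟶ B)
    (hir : i ≫ r = 𝟙 B) (h : Subsingleton (Abelian.Ext A Q 1)) :
    Subsingleton (Abelian.Ext A B 1) := by
  have key : ∀ z : Abelian.Ext A B 1, z = 0 := by
    intro z
    have hz : z.comp (Ext.mk₀ i) (add_zero 1) = 0 := Subsingleton.elim _ _
    calc z = z.comp (Ext.mk₀ (i ≫ r)) (add_zero 1) := by rw [hir, Ext.comp_mk₀_id]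
      _ = z.comp ((Ext.mk₀ i).comp (Ext.mk₀ r) (zero_add 0)) (add_zero 1) := by
          rw [Ext.mk₀_comp_mk₀]
      _ = (z.comp (Ext.mk₀ i) (add_zero 1)).comp (Ext.mk₀ r) (add_zero 1) :=
          (Ext.comp_assoc_of_second_deg_zero _ _ _ _).symm
      _ = 0 := by rw [hz, Ext.zero_comp]
  exact ⟨fun x y => by rw [key x, key y]⟩

end Aux

/-- For a complete hereditary cotorsion triplet `(F, G, L)`, `F ∩ G` is the class
of projective objects and `G ∩ L` is the class of injective objects. -/
theorem inter_eq_proj_inj_of_triplet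
    {C : Type u} [Category.{v} C] [Abelian C] [HasExt.{w} C]
    (F G L : Set C)
    (hFG : IsCotorsionPair.{w} F G) (hGL : IsCotorsionPair.{w} G L)
    (hFGc : Complete F G) (hGLc : Complete G L)
    (hFGh : Hereditary.{w} F G) (hGLh : Hereditary.{w} G L) :
    F ∩ G = {A : C | Projective A} ∧ G ∩ L = {A : C | Injective A} := by
  open CategoryTheory.Abelian in
  constructor
  · ext A
    simp only [Set.mem_inter_iff, Set.mem_setOf_eq]
    constructor
    · rintro ⟨hAF, hAG⟩
      apply projective_of_ext_vanish
      intro K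
      obtain ⟨⟨L₀, hL₀, G₀, hG₀, f, g, w, hS⟩, -⟩ := hGLc K
      haveI h1 : Subsingleton (Abelian.Ext A G₀ 1) := (hFG.mem_left_iff A).1 hAF G₀ hG₀
      haveI h2 : Subsingleton (Abelian.Ext A L₀ 2) := hGLh A hAG L₀ hL₀ 2 (by norm_num)
      have key : ∀ z : Abelian.Ext A K 1, z = 0 := by
        intro z
        obtain ⟨x₂, hx₂⟩ := Ext.covariant_sequence_exact₃ A hS z rfl (Subsingleton.elim _ _)
        rw [← hx₂, Subsingleton.elim x₂ 0, Ext.zero_comp]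
      exact ⟨fun x y => by rw [key x, key y]⟩
    · intro hA
      haveI : Projective A := hA
      constructor
      · rw [hFG.mem_left_iff]
        intro B hB
        obtain ⟨G₀, hG₀, F₀, hF₀, f, g, w, hS⟩ := (hFGc A).1
        haveI := hS.epi_g
        exact subsingleton_ext_of_retract_fst (Projective.factorThru (𝟙 A) g) g
          (Projective.factorThru_comp _ _) ((hFG.mem_left_iff F₀).1 hF₀ B hB)
      · rw [hFG.mem_right_iff]
        intro A' hA'
        obtain ⟨L₀, hL₀, G₀, hG₀, f, g, w, hS⟩ := (hGLc A).1
        haveI := hS.epi_g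
        exact subsingleton_ext_of_retract_snd (Projective.factorThru (𝟙 A) g) g
          (Projective.factorThru_comp _ _) ((hFG.mem_left_iff A').1 hA' G₀ hG₀)
  · ext B
    simp only [Set.mem_inter_iff, Set.mem_setOf_eq]
    constructor
    · rintro ⟨hBG, hBL⟩
      apply injective_of_ext_vanish
      intro M
      obtain ⟨-, G₀, hG₀, F₀, hF₀, f, g, w, hS⟩ := hFGc M
      haveI h1 : Subsingleton (Abelian.Ext G₀ B 1) := (hGL.mem_right_iff B).1 hBL G₀ hG₀
      haveI h2 : Subsingleton (Abelian.Ext F₀ B 2) := hFGh F₀ hF₀ B hBG 2 (by norm_num)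
      have key : ∀ z : Abelian.Ext M B 1, z = 0 := by
        intro z
        obtain ⟨x₂, hx₂⟩ := Ext.contravariant_sequence_exact₁ hS B z rfl
          (Subsingleton.elim _ _)
        rw [← hx₂, Subsingleton.elim x₂ 0, Ext.comp_zero]
      exact ⟨fun x y => by rw [key x, key y]⟩
    · intro hB
      haveI : Injective B := hB
      constructor
      · rw [hFG.mem_right_iff]
        intro A hA
        obtain ⟨-, G₀, hG₀, F₀, hF₀, f, g, w, hS⟩ := hFGc B
        haveI := hS.mono_f
        exact subsingleton_ext_of_retract_snd f (Injective.factorThru (𝟙 B) f)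
          (Injective.comp_factorThru _ _) ((hFG.mem_left_iff A).1 hA G₀ hG₀)
      · rw [hGL.mem_right_iff]
        intro A hA
        obtain ⟨-, L₀, hL₀, G₀, hG₀, f, g, w, hS⟩ := hGLc B
        haveI := hS.mono_f
        exact subsingleton_ext_of_retract_snd f (Injective.factorThru (𝟙 B) f)
          (Injective.comp_factorThru _ _) ((hGL.mem_left_iff A).1 hA L₀ hL₀)

end Paper
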